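/- Assume 2rlη = r' with r, r' ∈ ℤ, r > 0. Let u, v ∈ ℂ, write G := θ^{(2l)}_{00}, suppose G((v−u)/2+2mlη) ≠ 0 for all m ∈ ℤ, and let t : ℤ → ℂ satisfy t_{m+2}·G((v−u)/2+2mlη) = t_m·G((u−v)/2+2mlη) for all m ∈ ℤ. Define y_{j,i} := t_{j+i}·t_{−j+i+1} for j, i ∈ ℤ. Consider a j-transition (j'' → j''') of one of the four types: j''' = j''+1, j''' = j''−1, j''' = j'' = 1, or j''' = j'' = r, and likewise an i-transition (i'' → i'''). Then y_{j''',i'''}·G((v−u)/2 + 2wlη) = y_{j'',i''}·G((u−v)/2 + 2wlη), where w is given as follows: w = i''+j'' if (i'''=i''+1, j'''=j''+1); w = i''−j''+1 if (i''+1, j''−1); w = i'' if (i''+1, j'''=j''=1); w = i''+r if (i''+1, j'''=j''=r); w = −i''+j''+1 if (i''−1, j''+1); w = −i''−j''+2 if (i''−1, j''−1); w = −i''+1 if (i''−1, j'''=j''=1); w = −i''+r+1 if (i''−1, j'''=j''=r); w = j'' if (i'''=i''=1, j''+1); w = −j''+1 if (i'''=i''=1, j''−1); w = 0 if (i'''=i''=1,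 j'''=j''=1); w = r if (i'''=i''=1, j'''=j''=r); w = j''+r if (i'''=i''=r, j''+1); w = −j''+r+1 if (i'''=i''=r, j''−1); w = r if (i'''=i''=r, j'''=j''=1); w = 2r if (i'''=i''=r, j'''=j''=r). -/

import Mathlib

noncomputable section

open Complex

/-- Theta function with characteristics `θ_{ab}(z,τ)`. -/
def theta (a b : ℝ) (z τ : ℂ) : ℂ :=
  ∑' n : ℤ, Complex.exp ((Real.pi : ℂ) * Complex.I * ((a : ℂ)/2 + (n : ℂ))^2 * τ +
    2 * (Real.pi : ℂ) * Complex.I * ((a : ℂ)/2 + (n : ℂ)) * ((b : ℂ)/2 + z))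

/-- `[z;a]_k := ∏_{j=0}^{k-1} θ₁₁(z+a+2jη,τ) θ₁₁(-z+a+2jη,τ)`. -/
def brK (η τ z a : ℂ) (k : ℕ) : ℂ :=
  ∏ j ∈ Finset.range k,
    theta 1 1 (z + a + 2*(j:ℂ)*η) τ * theta 1 1 (-z + a + 2*(j:ℂ)*η) τ

/-- `f_ε(λ,u,z) := [z;(ελ+u)/2+(-l+1)η]_{2l}`, with `tl = 2l`. -/
def fEps (η τ l : ℂ) (tl : ℕ) (ε lam u z : ℂ) : ℂ :=
  brK η τ z ((ε*lam + u)/2 + (-l+1)*η) tl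

/-- `ω_λ(u;v)(z) := [z;(λ+u-v)/2+(-l+1)η]_{2l}`. -/
def omegaFn (η τ l : ℂ) (tl : ℕ) (lam u v z : ℂ) : ℂ :=
  brK η τ z ((lam + u - v)/2 + (-l+1)*η) tl

def s0f (η τ z : ℂ) : ℂ := theta 1 1 η τ * theta 1 1 (2*z) τ
def s1f (η τ z : ℂ) : ℂ := theta 1 0 η τ * theta 1 0 (2*z) τ
def s2f (η τ z : ℂ) : ℂ := Complex.I * theta 0 0 η τ * theta 0 0 (2*z) τ
def s3f (η τ z : ℂ) : ℂ := theta 0 1 η τ * theta 0 1 (2*z) τ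

/-- The difference operator `ρ^l(S^a)` associated to the coefficient function `s`. -/
def rhoS (η τ l : ℂ) (s : ℂ → ℂ) : (ℂ → ℂ) →ₗ[ℂ] (ℂ → ℂ) where
  toFun f := fun z =>
    (s (z - l*η) * f (z + η) - s (-z - l*η) * f (z - η)) / theta 1 1 (2*z) τ
  map_add' f g := by
    funext z
    simp only [Pi.add_apply]
    ring
  map_smul' c f := by
    funext z
    simp only [Pi.smul_apply, smul_eq_mul, RingHom.id_apply]
    ring

def W0 (η τ u : ℂ) : ℂ := theta 1 1 u τ / theta 1 1 η τ
def W1 (η τ u : ℂ) : ℂ := theta 1 0 u τ / theta 1 0 η τ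
def W2 (η τ u : ℂ) : ℂ := theta 0 0 u τ / theta 0 0 η τ
def W3 (η τ u : ℂ) : ℂ := theta 0 1 u τ / theta 0 1 η τ

/-- `θ^{(2l)}_{00}(u) := ∏_{j=0}^{2l-1} θ₀₀(u+(2j-2l+1)η,τ)`, with `tl = 2l`. -/
def theta2l (η τ : ℂ) (tl : ℕ) (u : ℂ) : ℂ :=
  ∏ j ∈ Finset.range tl, theta 0 0 (u + (2*(j:ℂ) - (tl:ℂ) + 1)*η) τ

/-- The gauge transformation matrix `M_λ(v)`. -/
def Mlam (τ lam v : ℂ) : Matrix (Fin 2) (Fin 2) ℂ :=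
  !![-theta 0 0 ((lam - v)/2) (τ/2), -theta 0 0 ((lam + v)/2) (τ/2);
     theta 0 1 ((lam - v)/2) (τ/2), theta 0 1 ((lam + v)/2) (τ/2)]

/-- The `L`-operator as a 2×2 matrix of difference operators. -/
def LopM (η τ l u : ℂ) : Matrix (Fin 2) (Fin 2) (Module.End ℂ (ℂ → ℂ)) :=
  !![W0 η τ u • rhoS η τ l (s0f η τ) + W3 η τ u • rhoS η τ l (s3f η τ),
     W1 η τ u • rhoS η τ l (s1f η τ) - (Complex.I * W2 η τ u) • rhoS η τ l (s2f η τ);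
     W1 η τ u • rhoS η τ l (s1f η τ) + (Complex.I * W2 η τ u) • rhoS η τ l (s2f η τ),
     W0 η τ u • rhoS η τ l (s0f η τ) - W3 η τ u • rhoS η τ l (s3f η τ)]

/-- `N := adj(M_{λ₀+4(j+ε)lη}(v)) · L(u) · M_{λ₀+4jlη}(v)`. -/
def NMat (η τ l lam0 v u : ℂ) (j : ℤ) (ε : ℂ) :
    Matrix (Fin 2) (Fin 2) (Module.End ℂ (ℂ → ℂ)) :=
  ((Mlam τ (lam0 + 4*((j:ℂ)+ε)*l*η) v).adjugate).map
      (algebraMap ℂ (Module.End ℂ (ℂ → ℂ))) *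
    LopM η τ l u *
    (Mlam τ (lam0 + 4*(j:ℂ)*l*η) v).map (algebraMap ℂ (Module.End ℂ (ℂ → ℂ)))

/-- The kernel `μ(z,w)` of the Sklyanin form. -/
def muK (η τ : ℂ) (tl : ℕ) (z w : ℂ) : ℂ :=
  theta 1 1 (2*z) τ * theta 1 1 (2*w) τ /
    ∏ j ∈ Finset.range (tl + 2),
      (theta 0 0 (z + w + (2*(j:ℂ) - (tl:ℂ) - 1)*η) τ *
       theta 0 0 (z - w + (2*(j:ℂ) - (tl:ℂ) - 1)*η) τ)

/-- Integrand of the Sklyanin form. -/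
def sklIntegrand (η τ : ℂ) (tl : ℕ) (f g : ℂ → ℂ) (x y : ℝ) : ℂ :=
  (starRingEnd ℂ) (f ((x:ℂ) + (y:ℂ)*Complex.I)) * g ((x:ℂ) + (y:ℂ)*Complex.I) *
    muK η τ tl ((x:ℂ) + (y:ℂ)*Complex.I) ((x:ℂ) - (y:ℂ)*Complex.I)

/-- The Sklyanin form `⟨f,g⟩` (with `τ = i t₀`). -/
def sklForm (η τ : ℂ) (tl : ℕ) (t0 : ℝ) (f g : ℂ → ℂ) : ℂ :=
  ∫ x in (0:ℝ)..1, ∫ y in (0:ℝ)..t0, sklIntegrand η τ tl f g x y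

/-- The constant `C_{2l}`. -/
def C2l (η τ : ℂ) (tl : ℕ) : ℂ :=
  (-2*η * Complex.exp (3*(Real.pi:ℂ)*Complex.I*τ/4)) /
    (theta 1 1 (2*((tl:ℂ)+1)*η) τ *
      ∏' j : ℕ, (1 - Complex.exp (2*(Real.pi:ℂ)*Complex.I*((j:ℂ)+1)*τ))^3)
/-- `y_{j,i} := t_{j+i} t_{-j+i+1}`. -/
def yT (t : ℤ → ℂ) (j i : ℤ) : ℂ := t (j+i) * t (-j+i+1)


section AuxStmt15

lemma theta00_neg (τ z : ℂ) : theta 0 0 (-z) τ = theta 0 0 z τ := by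
  unfold theta
  rw [← (Equiv.neg ℤ).tsum_eq (fun n : ℤ => Complex.exp ((Real.pi : ℂ) * Complex.I * (((0:ℝ) : ℂ)/2 + (n : ℂ))^2 * τ +
    2 * (Real.pi : ℂ) * Complex.I * (((0:ℝ) : ℂ)/2 + (n : ℂ)) * (((0:ℝ) : ℂ)/2 + z)))]
  refine tsum_congr fun n => ?_
  congr 1
  simp only [Equiv.neg_apply, Int.cast_neg]
  push_cast
  ring

lemma theta00_int (τ z : ℂ) (k : ℤ) : theta 0 0 (z + (k:ℂ)) τ = theta 0 0 z τ := by
  unfold theta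
  refine tsum_congr fun n => ?_
  have : (Real.pi : ℂ) * Complex.I * (((0:ℝ):ℂ)/2 + (n : ℂ))^2 * τ +
      2 * (Real.pi : ℂ) * Complex.I * (((0:ℝ):ℂ)/2 + (n : ℂ)) * (((0:ℝ):ℂ)/2 + (z + (k:ℂ)))
      = ((Real.pi : ℂ) * Complex.I * (((0:ℝ):ℂ)/2 + (n : ℂ))^2 * τ +
      2 * (Real.pi : ℂ) * Complex.I * (((0:ℝ):ℂ)/2 + (n : ℂ)) * (((0:ℝ):ℂ)/2 + z))
      + ((n*k : ℤ):ℂ) * (2 * (Real.pi:ℂ) * Complex.I) := by push_cast; ring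
  rw [this, Complex.exp_add, Complex.exp_int_mul_two_pi_mul_I, mul_one]

lemma theta2l_int (η τ : ℂ) (tl : ℕ) (x : ℂ) (k : ℤ) :
    theta2l η τ tl (x + (k:ℂ)) = theta2l η τ tl x := by
  unfold theta2l
  refine Finset.prod_congr rfl fun j _ => ?_
  rw [show x + (k:ℂ) + (2*(j:ℂ) - (tl:ℂ) + 1)*η = (x + (2*(j:ℂ) - (tl:ℂ) + 1)*η) + (k:ℂ) by ring,
    theta00_int]

lemma theta2l_neg (η τ : ℂ) (tl : ℕ) (x : ℂ) :
    theta2l η τ tl (-x) = theta2l η τ tl x := by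
  unfold theta2l
  rw [← Finset.prod_range_reflect (fun j => theta 0 0 (x + (2*(j:ℂ) - (tl:ℂ) + 1)*η) τ) tl]
  refine Finset.prod_congr rfl fun j hj => ?_
  simp only [Finset.mem_range] at hj
  have h1 : ((tl - 1 - j : ℕ):ℂ) = (tl:ℂ) - 1 - (j:ℂ) := by
    rw [Nat.sub_sub, Nat.cast_sub (by omega)]
    push_cast; ring
  rw [h1, show x + (2*((tl:ℂ) - 1 - (j:ℂ)) - (tl:ℂ) + 1)*η
      = -(-x + (2*(j:ℂ) - (tl:ℂ) + 1)*η) by ring, theta00_neg]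

section MasterAux
variable {g h t : ℤ → ℂ} {r : ℕ}

variable {g h t : ℤ → ℂ} {r : ℕ}

lemma hAr' (hB : ∀ m : ℤ, h m = g (-m)) (hA : ∀ m : ℤ, t (m+2) * g m = t m * h m)
    (m : ℤ) : t (-m+2) * h m = t (-m) * g m := by
  have h1 := hA (-m)
  rw [← hB m, hB (-m), neg_neg] at h1
  exact h1

lemma chainL (hA : ∀ m : ℤ, t (m+2) * g m = t m * h m) (n : ℕ) (a : ℤ) :
    t (a + 2*(n:ℤ)) * ∏ s ∈ Finset.range n, g (a + 2*(s:ℤ))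
      = t a * ∏ s ∈ Finset.range n, h (a + 2*(s:ℤ)) := by
  induction n with
  | zero => simp
  | succ n ih =>
      rw [Finset.prod_range_succ, Finset.prod_range_succ]
      have h1 := hA (a + 2*(n:ℤ))
      set P := ∏ s ∈ Finset.range n, g (a + 2*(s:ℤ)) with hP
      set Q := ∏ s ∈ Finset.range n, h (a + 2*(s:ℤ)) with hQ
      push_cast
      linear_combination (norm := ring_nf) P * h1 + h (a + 2*(n:ℤ)) * ih

lemma Pshift1 (hg0 : ∀ m : ℤ, g m ≠ 0) (hper : ∀ m : ℤ, g (m + (r:ℤ)) = g m) (b : ℤ) :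
    ∏ s ∈ Finset.range r, g (b + 2 + 2*(s:ℤ)) = ∏ s ∈ Finset.range r, g (b + 2*(s:ℤ)) := by
  have hfr : g (b + 2*((r:ℕ):ℤ)) = g (b + 2*((0:ℕ):ℤ)) := by
    rw [show b + 2*((r:ℕ):ℤ) = (b + (r:ℤ)) + (r:ℤ) by push_cast; ring, hper, hper]
    norm_num
  have e1 := Finset.prod_range_succ' (fun s : ℕ => g (b + 2*(s:ℤ))) r
  have e2 := Finset.prod_range_succ (fun s : ℕ => g (b + 2*(s:ℤ))) r
  rw [e2, hfr] at e1
  have cancel := mul_right_cancel₀ (hg0 _) e1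
  calc ∏ s ∈ Finset.range r, g (b + 2 + 2*(s:ℤ))
      = ∏ s ∈ Finset.range r, g (b + 2*(((s+1:ℕ)):ℤ)) := by
        refine Finset.prod_congr rfl fun s _ => ?_
        congr 1; push_cast; ring
    _ = ∏ s ∈ Finset.range r, g (b + 2*(s:ℤ)) := cancel.symm

lemma PshiftK (hg0 : ∀ m : ℤ, g m ≠ 0) (hper : ∀ m : ℤ, g (m + (r:ℤ)) = g m) (k b : ℤ) :
    ∏ s ∈ Finset.range r, g (b + 2*k + 2*(s:ℤ)) = ∏ s ∈ Finset.range r, g (b + 2*(s:ℤ)) := by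
  induction k using Int.induction_on with
  | zero => norm_num
  | succ k ih =>
      have h1 := Pshift1 hg0 hper (b + 2*(k:ℤ))
      calc ∏ s ∈ Finset.range r, g (b + 2*((k:ℤ)+1) + 2*(s:ℤ))
          = ∏ s ∈ Finset.range r, g (b + 2*(k:ℤ) + 2 + 2*(s:ℤ)) := by
            refine Finset.prod_congr rfl fun s _ => ?_; congr 1; ring
        _ = ∏ s ∈ Finset.range r, g (b + 2*(k:ℤ) + 2*(s:ℤ)) := h1
        _ = _ := ih
  | pred k ih =>
      have h1 := Pshift1 hg0 hper (b + 2*(-(k:ℤ)-1))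
      have h2 : ∏ s ∈ Finset.range r, g (b + 2*(-(k:ℤ)-1) + 2 + 2*(s:ℤ))
          = ∏ s ∈ Finset.range r, g (b + 2*(-(k:ℤ)) + 2*(s:ℤ)) := by
        refine Finset.prod_congr rfl fun s _ => ?_; congr 1; ring
      rw [h2] at h1
      rw [h1] at ih
      exact ih

lemma Srefl (hg0 : ∀ m : ℤ, g m ≠ 0) (hB : ∀ m : ℤ, h m = g (-m))
    (hper : ∀ m : ℤ, g (m + (r:ℤ)) = g m) (a : ℤ) :
    ∏ s ∈ Finset.range r, h (a + 2*(s:ℤ)) = ∏ s ∈ Finset.range r, g (a + 2*(s:ℤ)) := by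
  have hrefl := Finset.prod_range_reflect (fun s : ℕ => g (-(a + 2*(s:ℤ)))) r
  calc ∏ s ∈ Finset.range r, h (a + 2*(s:ℤ))
      = ∏ s ∈ Finset.range r, g (-(a + 2*(s:ℤ))) := by
        refine Finset.prod_congr rfl fun s _ => ?_; rw [hB]
    _ = ∏ s ∈ Finset.range r, g (-(a + 2*(((r - 1 - s : ℕ)):ℤ))) := hrefl.symm
    _ = ∏ s ∈ Finset.range r, g (a + 2*(1 - a - (r:ℤ)) + 2*(s:ℤ)) := by
        refine Finset.prod_congr rfl fun s hs => ?_
        simp only [Finset.mem_range] at hs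
        congr 1
        have h1 : ((r - 1 - s : ℕ):ℤ) = (r:ℤ) - 1 - (s:ℤ) := by
          rw [Nat.sub_sub, Nat.cast_sub (by omega)]; push_cast; ring
        rw [h1]; ring
    _ = ∏ s ∈ Finset.range r, g (a + 2*(s:ℤ)) := PshiftK hg0 hper (1 - a - (r:ℤ)) a

lemma tper' (hg0 : ∀ m : ℤ, g m ≠ 0) (hB : ∀ m : ℤ, h m = g (-m))
    (hper : ∀ m : ℤ, g (m + (r:ℤ)) = g m)
    (hA : ∀ m : ℤ, t (m+2) * g m = t m * h m) (a : ℤ) :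
    t (a + 2*(r:ℤ)) = t a := by
  have hc := chainL (g := g) (h := h) hA r a
  rw [Srefl hg0 hB hper a] at hc
  exact mul_right_cancel₀ (Finset.prod_ne_zero_iff.2 fun s _ => hg0 _) hc

lemma hFlem (hg0 : ∀ m : ℤ, g m ≠ 0) (hB : ∀ m : ℤ, h m = g (-m))
    (hA : ∀ m : ℤ, t (m+2) * g m = t m * h m) (m : ℤ) :
    t (m+1) * t (-m) * g m = t m * t (1-m) * h m := by
  have hh0 : ∀ m : ℤ, h m ≠ 0 := fun m => by rw [hB]; exact hg0 _
  have hAr := hAr' hB hA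
  induction m using Int.induction_on with
  | zero =>
      rw [show h 0 = g 0 from by rw [hB]; norm_num]
      ring_nf
  | succ k ih =>
      apply mul_right_cancel₀ (mul_ne_zero (hg0 (k:ℤ)) (hh0 ((k:ℤ)+1)))
      push_cast
      linear_combination (norm := ring_nf)
        (t (-(k:ℤ)-1) * g ((k:ℤ)+1) * h ((k:ℤ)+1)) * hA (k:ℤ)
        - h ((k:ℤ)+1)^2 * ih
        - (t (k:ℤ) * h (k:ℤ) * h ((k:ℤ)+1)) * hAr ((k:ℤ)+1)
  | pred k ih =>
      apply mul_right_cancel₀ (hh0 (-(k:ℤ)))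
      push_cast
      linear_combination (norm := ring_nf)
        - g (-(k:ℤ)-1) * ih
        + (t ((k:ℤ)) * g (-(k:ℤ))) * hA (-(k:ℤ)-1)
        - (t (-(k:ℤ)-1) * h (-(k:ℤ)-1)) * hAr (-(k:ℤ))


lemma master (g h t : ℤ → ℂ) (r : ℕ)
    (hg0 : ∀ m : ℤ, g m ≠ 0) (hB : ∀ m : ℤ, h m = g (-m))
    (hper : ∀ m : ℤ, g (m + (r:ℤ)) = g m)
    (hA : ∀ m : ℤ, t (m+2) * g m = t m * h m) :
    (∀ j i : ℤ, yT t (j+1) (i+1) * g (i+j) = yT t j i * h (i+j)) ∧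
    (∀ j i : ℤ, yT t (j-1) (i+1) * g (i-j+1) = yT t j i * h (i-j+1)) ∧
    (∀ i : ℤ, yT t ((1:ℤ)) (i+1) * g i = yT t ((1:ℤ)) i * h i) ∧
    (∀ i : ℤ, yT t ((r:ℤ)) (i+1) * g (i+(r:ℤ)) = yT t ((r:ℤ)) i * h (i+(r:ℤ))) ∧
    (∀ j i : ℤ, yT t (j+1) (i-1) * g (-i+j+1) = yT t j i * h (-i+j+1)) ∧
    (∀ j i : ℤ, yT t (j-1) (i-1) * g (-i-j+2) = yT t j i * h (-i-j+2)) ∧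
    (∀ i : ℤ, yT t ((1:ℤ)) (i-1) * g (-i+1) = yT t ((1:ℤ)) i * h (-i+1)) ∧
    (∀ i : ℤ, yT t ((r:ℤ)) (i-1) * g (-i+(r:ℤ)+1) = yT t ((r:ℤ)) i * h (-i+(r:ℤ)+1)) ∧
    (∀ j : ℤ, yT t (j+1) ((1:ℤ)) * g j = yT t j ((1:ℤ)) * h j) ∧
    (∀ j : ℤ, yT t (j-1) ((1:ℤ)) * g (-j+1) = yT t j ((1:ℤ)) * h (-j+1)) ∧
    (yT t ((1:ℤ)) ((1:ℤ)) * g 0 = yT t ((1:ℤ)) ((1:ℤ)) * h 0) ∧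
    (yT t ((r:ℤ)) ((1:ℤ)) * g ((r:ℤ)) = yT t ((r:ℤ)) ((1:ℤ)) * h ((r:ℤ))) ∧
    (∀ j : ℤ, yT t (j+1) ((r:ℤ)) * g (j+(r:ℤ)) = yT t j ((r:ℤ)) * h (j+(r:ℤ))) ∧
    (∀ j : ℤ, yT t (j-1) ((r:ℤ)) * g (-j+(r:ℤ)+1) = yT t j ((r:ℤ)) * h (-j+(r:ℤ)+1)) ∧
    (yT t ((1:ℤ)) ((r:ℤ)) * g ((r:ℤ)) = yT t ((1:ℤ)) ((r:ℤ)) * h ((r:ℤ))) ∧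
    (yT t ((r:ℤ)) ((r:ℤ)) * g (2*(r:ℤ)) = yT t ((r:ℤ)) ((r:ℤ)) * h (2*(r:ℤ))) := by
  have tper : ∀ a : ℤ, t (a + 2*(r:ℤ)) = t a := tper' hg0 hB hper hA
  have hAr : ∀ m : ℤ, t (-m+2) * h m = t (-m) * g m := hAr' hB hA
  have hF : ∀ m : ℤ, t (m+1) * t (-m) * g m = t m * t (1-m) * h m := hFlem hg0 hB hA
  have hFB : ∀ m : ℤ, t m * t (1-m) * g (-m) = t (m+1) * t (-m) * h (-m) := by
    intro m
    rw [← hB m, hB (-m), neg_neg]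
    exact (hF m).symm
  have hg1 : g (-(r:ℤ)) = g 0 := by
    have := hper (-(r:ℤ)); rw [neg_add_cancel] at this; exact this.symm
  have hg2 : g ((r:ℤ)) = g 0 := by
    have := hper 0; rw [zero_add] at this; exact this
  have hgr : h ((r:ℤ)) = g ((r:ℤ)) := by rw [hB, hg1, hg2]
  have hg3 : g (2*(r:ℤ)) = g 0 := by
    have := hper ((r:ℤ)); rw [hg2] at this
    rw [show 2*(r:ℤ) = (r:ℤ) + (r:ℤ) by ring]; exact this
  have hg4 : g (-(2*(r:ℤ))) = g 0 := by
    have := hper (-(2*(r:ℤ)))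
    rw [show -(2*(r:ℤ)) + (r:ℤ) = -(r:ℤ) by ring, hg1] at this
    exact this.symm
  have hg2r : h (2*(r:ℤ)) = g (2*(r:ℤ)) := by rw [hB, hg4, hg3]
  refine ⟨?_, ?_, ?_, ?_, ?_, ?_, ?_, ?_, ?_, ?_, ?_, ?_, ?_, ?_, ?_, ?_⟩
  · intro j i; simp only [yT]
    linear_combination (norm := ring_nf) t (-j+i+1) * hA (i+j)
  · intro j i; simp only [yT]
    linear_combination (norm := ring_nf) t (j+i) * hA (i-j+1)
  · intro i; simp only [yT]
    linear_combination (norm := ring_nf) t (i+1) * hA i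
  · intro i; simp only [yT]
    linear_combination (norm := ring_nf)
      (t (-(r:ℤ)+i+2) * g (i+(r:ℤ))) * tper (i+1-(r:ℤ))
      - (t (i+1-(r:ℤ)) * g (i+(r:ℤ))) * tper (-(r:ℤ)+i+2)
      + t (i+1-(r:ℤ)) * hA (i+(r:ℤ))
  · intro j i; simp only [yT]
    linear_combination (norm := ring_nf) (- t (j+i)) * hAr (-i+j+1)
  · intro j i; simp only [yT]
    linear_combination (norm := ring_nf) (- t (-j+i+1)) * hAr (-i-j+2)
  · intro i; simp only [yT]
    linear_combination (norm := ring_nf) (- t i) * hAr (-i+1)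
  · intro i; simp only [yT]
    linear_combination (norm := ring_nf)
      (t (i-(r:ℤ)) * g (-i+(r:ℤ)+1)) * tper (i-1-(r:ℤ))
      - (t (i-(r:ℤ)+1) * h (-i+(r:ℤ)+1)) * tper (i-(r:ℤ))
      - t (i-(r:ℤ)) * hAr (-i+(r:ℤ)+1)
  · intro j; simp only [yT]
    linear_combination (norm := ring_nf) t (1-j) * hA j - t (j+1) * hAr j - hF j
  · intro j; simp only [yT]
    linear_combination (norm := ring_nf) t j * hA (1-j) - hF (1-j) - t (2-j) * hAr (1-j)
  · rw [show h 0 = g 0 from by rw [hB]; norm_num]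
  · rw [hgr]
  · intro j; simp only [yT]
    linear_combination (norm := ring_nf)
      (t (j+(r:ℤ)+1) * g (j+(r:ℤ))) * tper (-j-(r:ℤ))
      - (t (j+(r:ℤ)) * h (j+(r:ℤ))) * tper (1-j-(r:ℤ))
      + hF (j+(r:ℤ))
  · intro j; simp only [yT]
    linear_combination (norm := ring_nf)
      (t ((r:ℤ)+2-j) * g (-j+(r:ℤ)+1)) * tper (j-1-(r:ℤ))
      - (t ((r:ℤ)+1-j) * h (-j+(r:ℤ)+1)) * tper (j-(r:ℤ))
      + hFB (j-(r:ℤ)-1)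
  · rw [hgr]
  · rw [hg2r]


end MasterAux

end AuxStmt15

/-- The 16 cases of `y_{j''',i'''}/y_{j'',i''} = G((u-v)/2+2wlη)/G((v-u)/2+2wlη)`. -/
theorem stmt15 (τ : ℂ) (hτ : 0 < τ.im) (η l : ℂ) (tl : ℕ) (htl : 0 < tl)
    (hl : (tl:ℂ) = 2*l)
    (r : ℕ) (r' : ℤ) (hr : 0 < r) (hη : 2*(r:ℂ)*l*η = (r':ℂ))
    (u v : ℂ)
    (hG : ∀ m : ℤ, theta2l η τ tl ((v-u)/2 + 2*(m:ℂ)*l*η) ≠ 0)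
    (t : ℤ → ℂ)
    (ht : ∀ m : ℤ, t (m+2) * theta2l η τ tl ((v-u)/2 + 2*(m:ℂ)*l*η)
        = t m * theta2l η τ tl ((u-v)/2 + 2*(m:ℂ)*l*η)) :
    (∀ j i : ℤ, yT t (j+1) (i+1) * theta2l η τ tl ((v-u)/2 + 2*((i+j : ℤ):ℂ)*l*η)
      = yT t (j) (i) * theta2l η τ tl ((u-v)/2 + 2*((i+j : ℤ):ℂ)*l*η)) ∧
    (∀ j i : ℤ, yT t (j-1) (i+1) * theta2l η τ tl ((v-u)/2 + 2*((i-j+1 : ℤ):ℂ)*l*η)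
      = yT t (j) (i) * theta2l η τ tl ((u-v)/2 + 2*((i-j+1 : ℤ):ℂ)*l*η)) ∧
    (∀ i : ℤ, yT t ((1:ℤ)) (i+1) * theta2l η τ tl ((v-u)/2 + 2*((i : ℤ):ℂ)*l*η)
      = yT t ((1:ℤ)) (i) * theta2l η τ tl ((u-v)/2 + 2*((i : ℤ):ℂ)*l*η)) ∧
    (∀ i : ℤ, yT t ((r:ℤ)) (i+1) * theta2l η τ tl ((v-u)/2 + 2*((i+(r:ℤ) : ℤ):ℂ)*l*η)
      = yT t ((r:ℤ)) (i) * theta2l η τ tl ((u-v)/2 + 2*((i+(r:ℤ) : ℤ):ℂ)*l*η)) ∧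
    (∀ j i : ℤ, yT t (j+1) (i-1) * theta2l η τ tl ((v-u)/2 + 2*((-i+j+1 : ℤ):ℂ)*l*η)
      = yT t (j) (i) * theta2l η τ tl ((u-v)/2 + 2*((-i+j+1 : ℤ):ℂ)*l*η)) ∧
    (∀ j i : ℤ, yT t (j-1) (i-1) * theta2l η τ tl ((v-u)/2 + 2*((-i-j+2 : ℤ):ℂ)*l*η)
      = yT t (j) (i) * theta2l η τ tl ((u-v)/2 + 2*((-i-j+2 : ℤ):ℂ)*l*η)) ∧
    (∀ i : ℤ, yT t ((1:ℤ)) (i-1) * theta2l η τ tl ((v-u)/2 + 2*((-i+1 : ℤ):ℂ)*l*η)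
      = yT t ((1:ℤ)) (i) * theta2l η τ tl ((u-v)/2 + 2*((-i+1 : ℤ):ℂ)*l*η)) ∧
    (∀ i : ℤ, yT t ((r:ℤ)) (i-1) * theta2l η τ tl ((v-u)/2 + 2*((-i+(r:ℤ)+1 : ℤ):ℂ)*l*η)
      = yT t ((r:ℤ)) (i) * theta2l η τ tl ((u-v)/2 + 2*((-i+(r:ℤ)+1 : ℤ):ℂ)*l*η)) ∧
    (∀ j : ℤ, yT t (j+1) ((1:ℤ)) * theta2l η τ tl ((v-u)/2 + 2*((j : ℤ):ℂ)*l*η)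
      = yT t (j) ((1:ℤ)) * theta2l η τ tl ((u-v)/2 + 2*((j : ℤ):ℂ)*l*η)) ∧
    (∀ j : ℤ, yT t (j-1) ((1:ℤ)) * theta2l η τ tl ((v-u)/2 + 2*((-j+1 : ℤ):ℂ)*l*η)
      = yT t (j) ((1:ℤ)) * theta2l η τ tl ((u-v)/2 + 2*((-j+1 : ℤ):ℂ)*l*η)) ∧
    (yT t ((1:ℤ)) ((1:ℤ)) * theta2l η τ tl ((v-u)/2 + 2*(((0:ℤ) : ℤ):ℂ)*l*η)
      = yT t ((1:ℤ)) ((1:ℤ)) * theta2l η τ tl ((u-v)/2 + 2*(((0:ℤ) : ℤ):ℂ)*l*η)) ∧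
    (yT t ((r:ℤ)) ((1:ℤ)) * theta2l η τ tl ((v-u)/2 + 2*(((r:ℤ) : ℤ):ℂ)*l*η)
      = yT t ((r:ℤ)) ((1:ℤ)) * theta2l η τ tl ((u-v)/2 + 2*(((r:ℤ) : ℤ):ℂ)*l*η)) ∧
    (∀ j : ℤ, yT t (j+1) ((r:ℤ)) * theta2l η τ tl ((v-u)/2 + 2*((j+(r:ℤ) : ℤ):ℂ)*l*η)
      = yT t (j) ((r:ℤ)) * theta2l η τ tl ((u-v)/2 + 2*((j+(r:ℤ) : ℤ):ℂ)*l*η)) ∧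
    (∀ j : ℤ, yT t (j-1) ((r:ℤ)) * theta2l η τ tl ((v-u)/2 + 2*((-j+(r:ℤ)+1 : ℤ):ℂ)*l*η)
      = yT t (j) ((r:ℤ)) * theta2l η τ tl ((u-v)/2 + 2*((-j+(r:ℤ)+1 : ℤ):ℂ)*l*η)) ∧
    (yT t ((1:ℤ)) ((r:ℤ)) * theta2l η τ tl ((v-u)/2 + 2*(((r:ℤ) : ℤ):ℂ)*l*η)
      = yT t ((1:ℤ)) ((r:ℤ)) * theta2l η τ tl ((u-v)/2 + 2*(((r:ℤ) : ℤ):ℂ)*l*η)) ∧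
    (yT t ((r:ℤ)) ((r:ℤ)) * theta2l η τ tl ((v-u)/2 + 2*((2*(r:ℤ) : ℤ):ℂ)*l*η)
      = yT t ((r:ℤ)) ((r:ℤ)) * theta2l η τ tl ((u-v)/2 + 2*((2*(r:ℤ) : ℤ):ℂ)*l*η)) := by
  have hB : ∀ m : ℤ, theta2l η τ tl ((u-v)/2 + 2*(m:ℂ)*l*η)
      = theta2l η τ tl ((v-u)/2 + 2*((-m : ℤ):ℂ)*l*η) := by
    intro m
    rw [show (v-u)/2 + 2*((-m : ℤ):ℂ)*l*η = -((u-v)/2 + 2*(m:ℂ)*l*η) by push_cast; ring,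
      theta2l_neg]
  have hperG : ∀ m : ℤ, theta2l η τ tl ((v-u)/2 + 2*(((m + (r:ℤ)) : ℤ):ℂ)*l*η)
      = theta2l η τ tl ((v-u)/2 + 2*(m:ℂ)*l*η) := by
    intro m
    rw [show (v-u)/2 + 2*(((m + (r:ℤ)) : ℤ):ℂ)*l*η
        = ((v-u)/2 + 2*(m:ℂ)*l*η) + ((r':ℤ):ℂ) by push_cast; linear_combination hη,
      theta2l_int]
  exact master (fun m => theta2l η τ tl ((v-u)/2 + 2*(m:ℂ)*l*η))
    (fun m => theta2l η τ tl ((u-v)/2 + 2*(m:ℂ)*l*η)) t r hG hB hperG ht
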